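/- Let m, n ∈ ℕ₀ and t_1, …, t_m, u_1, …, u_n be Boolean terms. If s is an iterated join (in some order and bracketing, the empty join being the term 0) of t_1, …, t_m and s' is an iterated join of u_1, …, u_n, then the term (s ∧ s') is f-equivalent to any iterated join of the m·n terms (t_i ∧ u_j), i ∈ [m], j ∈ [n]. -/
import Mathlib


/-- Boolean terms (formulas). -/
inductive BT where
  | X : ℕ → BT
  | zero : BT
  | one : BT
  | or : BT → BT → BT
  | and : BT → BT → BT
  | not : BT → BT

namespace BT

/-- The evaluation map `Φ_A` of a Boolean term in a Boolean algebra `A`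
under an assignment `v : ℕ → A` of the variables. -/
def eval {A : Type*} [BooleanAlgebra A] (v : ℕ → A) : BT → A
  | X i => v i
  | zero => ⊥
  | one => ⊤
  | or t u => eval v t ⊔ eval v u
  | and t u => eval v t ⊓ eval v u
  | not t => (eval v t)ᶜ

/-- One-step Boolean transformation: the nineteen rules BT1–BT19, closed
under the term-forming operations (compatible closure). -/
inductive Step : BT → BT → Prop where
  | bt1 (u : BT) : Step (and zero u) zero
  | bt2 (u : BT) : Step (or zero u) u
  | bt3 (u : BT) : Step (and one u) u
  | bt4 (u : BT) : Step (or one u) one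
  | bt5 (u : BT) : Step (and u (not u)) zero
  | bt6 (u : BT) : Step (or u (not u)) one
  | bt7 (u u' : BT) : Step (or u u') (or u' u)
  | bt8 (u u' : BT) : Step (and u u') (and u' u)
  | bt9 (u u' u'' : BT) : Step (or u (or u' u'')) (or (or u u') u'')
  | bt10 (u u' u'' : BT) : Step (and u (and u' u'')) (and (and u u') u'')
  | bt11 (u : BT) : Step (or u u) u
  | bt12 (u : BT) : Step (and u u) u
  | bt13 (u u' u'' : BT) : Step (or u (and u' u'')) (and (or u u') (or u u''))
  | bt14 (u u' u'' : BT) : Step (and u (or u' u'')) (or (and u u') (and u u''))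
  | bt15 (u u' : BT) : Step (or u (and u u')) u
  | bt16 (u u' : BT) : Step (and u (or u u')) u
  | bt17 (u : BT) : Step (not (not u)) u
  | bt18 (u u' : BT) : Step (not (or u u')) (and (not u) (not u'))
  | bt19 (u u' : BT) : Step (not (and u u')) (or (not u) (not u'))
  | orLeft {t t' : BT} (u : BT) : Step t t' → Step (or t u) (or t' u)
  | orRight (u : BT) {t t' : BT} : Step t t' → Step (or u t) (or u t')
  | andLeft {t t' : BT} (u : BT) : Step t t' → Step (and t u) (and t' u)
  | andRight (u : BT) {t t' : BT} : Step t t' → Step (and u t) (and u t')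
  | notCong {t t' : BT} : Step t t' → Step (not t) (not t')

/-- f-equivalence of Boolean terms: the equivalence closure of `Step`. -/
def FEq (t u : BT) : Prop := Relation.EqvGen Step t u

end BT

namespace BT

/-- The literal of index `i` of type `τ i`: `X i` if `τ i = false`,
`¬ X i` if `τ i = true`. -/
def lit (τ : ℕ → Bool) (i : ℕ) : BT := if τ i then not (X i) else X i

/-- `IsMeetOfLits τ S t`: `t` is an iterated meet, in some order and
bracketing, of the literals `lit τ i` for `i ∈ S`, each used exactly once
(`S` nonempty). -/
inductive IsMeetOfLits (τ : ℕ → Bool) : Finset ℕ → BT → Prop where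
  | single (i : ℕ) : IsMeetOfLits τ {i} (lit τ i)
  | and {S S' : Finset ℕ} {t t' : BT} (h : Disjoint S S') :
      IsMeetOfLits τ S t → IsMeetOfLits τ S' t' →
      IsMeetOfLits τ (S ∪ S') (and t t')

/-- An `S`-monomial_∧ of type `τ`: an iterated meet of the literals of the
variables indexed by `S`, one per element of `S`; for `S = ∅` it is the
term `1`. (Only the values of `τ` on `S` are relevant.) -/
def IsMonA (S : Finset ℕ) (τ : ℕ → Bool) (t : BT) : Prop :=
  (S = ∅ ∧ t = one) ∨ IsMeetOfLits τ S t

/-- Nonempty iterated joins of the terms in a multiset. -/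
inductive IsJoinOfPos : Multiset BT → BT → Prop where
  | single (t : BT) : IsJoinOfPos {t} t
  | or {l l' : Multiset BT} {s s' : BT} :
      IsJoinOfPos l s → IsJoinOfPos l' s' → IsJoinOfPos (l + l') (or s s')

/-- `s` is an iterated join (in some order and bracketing) of the terms in
the multiset `l`; the empty join is the term `0`. -/
def IsJoinOf (l : Multiset BT) (s : BT) : Prop :=
  (l = 0 ∧ s = zero) ∨ IsJoinOfPos l s

end BT

deriving instance DecidableEq for BT

namespace BT

theorem FEq.rfl {t : BT} : FEq t t := Relation.EqvGen.refl t

theorem FEq.symm' {t u : BT} (h : FEq t u) : FEq u t := Relation.EqvGen.symm _ _ h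

theorem FEq.trans' {t u v : BT} (h : FEq t u) (h' : FEq u v) : FEq t v :=
  Relation.EqvGen.trans _ _ _ h h'

theorem Step.feq {t u : BT} (h : Step t u) : FEq t u := Relation.EqvGen.rel _ _ h

theorem FEq.orLeft {a a' : BT} (b : BT) (h : FEq a a') : FEq (or a b) (or a' b) := by
  induction h with
  | rel x y h => exact (Step.orLeft b h).feq
  | refl x => exact .rfl
  | symm x y _ ih => exact ih.symm'
  | trans x y z _ _ ih ih' => exact ih.trans' ih'

theorem FEq.orRight (a : BT) {b b' : BT} (h : FEq b b') : FEq (or a b) (or a b') := by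
  induction h with
  | rel x y h => exact (Step.orRight a h).feq
  | refl x => exact .rfl
  | symm x y _ ih => exact ih.symm'
  | trans x y z _ _ ih ih' => exact ih.trans' ih'

theorem FEq.orCongr {a a' b b' : BT} (h : FEq a a') (h' : FEq b b') :
    FEq (or a b) (or a' b') := (h.orLeft b).trans' (FEq.orRight a' h')

theorem feq_or_comm (a b : BT) : FEq (or a b) (or b a) := (Step.bt7 a b).feq

theorem feq_or_assoc (a b c : BT) : FEq (or a (or b c)) (or (or a b) c) :=
  (Step.bt9 a b c).feq

theorem feq_and_comm (a b : BT) : FEq (and a b) (and b a) := (Step.bt8 a b).feq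

/-- A nonempty join has a nonzero multiset. -/
theorem IsJoinOfPos.ne_zero {l : Multiset BT} {s : BT} (h : IsJoinOfPos l s) :
    l ≠ 0 := by
  induction h with
  | single t => simp
  | or h1 h2 ih1 ih2 => simp [Multiset.eq_zero_iff_forall_notMem] at *; tauto

/-- Extraction: from a join of `l` one can pull out any element `a ∈ l`. -/
theorem IsJoinOfPos.extract {l : Multiset BT} {s : BT} (h : IsJoinOfPos l s) :
    ∀ a ∈ l, (l = {a} ∧ FEq s a) ∨
      ∃ r, IsJoinOfPos (l.erase a) r ∧ FEq s (BT.or a r) := by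
  induction h with
  | single t =>
    intro a ha
    rw [Multiset.mem_singleton] at ha
    subst ha
    exact Or.inl ⟨rfl, .rfl⟩
  | @or l1 l2 s1 s2 h1 h2 ih1 ih2 =>
    intro a ha
    rw [Multiset.mem_add] at ha
    rcases ha with ha | ha
    · rcases ih1 a ha with ⟨hl, hf⟩ | ⟨r, hr, hf⟩
      · refine Or.inr ⟨s2, ?_, hf.orLeft s2⟩
        rw [Multiset.erase_add_left_pos _ ha, hl, Multiset.erase_singleton, zero_add]
        exact h2
      · refine Or.inr ⟨BT.or r s2, ?_, ?_⟩
        · rw [Multiset.erase_add_left_pos _ ha]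
          exact hr.or h2
        · exact (hf.orLeft s2).trans' (feq_or_assoc a r s2).symm'
    · rcases ih2 a ha with ⟨hl, hf⟩ | ⟨r, hr, hf⟩
      · refine Or.inr ⟨s1, ?_, ?_⟩
        · rw [Multiset.erase_add_right_pos _ ha, hl, Multiset.erase_singleton, add_zero]
          exact h1
        · exact (feq_or_comm s1 s2).trans' (hf.orLeft s1)
      · refine Or.inr ⟨BT.or r s1, ?_, ?_⟩
        · rw [Multiset.erase_add_right_pos _ ha, add_comm]
          exact hr.or h1
        · exact (feq_or_comm s1 s2).trans' ((hf.orLeft s1).trans'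
            (feq_or_assoc a r s1).symm')

/-- Any two joins of the same multiset are f-equivalent. -/
theorem IsJoinOfPos.feq : ∀ (l : Multiset BT) {s s' : BT},
    IsJoinOfPos l s → IsJoinOfPos l s' → FEq s s' := by
  intro l
  induction l using Multiset.strongInductionOn with
  | ih l IH =>
    intro s s' h h'
    obtain ⟨a, ha⟩ := Multiset.exists_mem_of_ne_zero h.ne_zero
    rcases h.extract a ha with ⟨hl, hf⟩ | ⟨r, hr, hf⟩ <;>
      rcases h'.extract a ha with ⟨hl', hf'⟩ | ⟨r', hr', hf'⟩
    · exact hf.trans' hf'.symm'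
    · exfalso; apply hr'.ne_zero; rw [hl, Multiset.erase_singleton]
    · exfalso; apply hr.ne_zero; rw [hl', Multiset.erase_singleton]
    · have : FEq r r' := IH _ (Multiset.erase_lt.mpr ha) hr hr'
      exact hf.trans' ((FEq.orRight a this).trans' hf'.symm')

/-- Distributing a single term over a join. -/
theorem and_join {a : BT} {l : Multiset BT} {s : BT} (h : IsJoinOfPos l s) :
    ∃ w, IsJoinOfPos (l.map (fun b => and a b)) w ∧ FEq (and a s) w := by
  induction h with
  | single b => exact ⟨and a b, by simpa using IsJoinOfPos.single _, .rfl⟩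
  | @or l1 l2 s1 s2 h1 h2 ih1 ih2 =>
    obtain ⟨w1, hw1, hf1⟩ := ih1
    obtain ⟨w2, hw2, hf2⟩ := ih2
    refine ⟨or w1 w2, by rw [Multiset.map_add]; exact hw1.or hw2, ?_⟩
    exact (Step.bt14 a s1 s2).feq.trans' (hf1.orCongr hf2)

/-- Distributing a join over a join. -/
theorem join_and_join {l l' : Multiset BT} {s s' : BT}
    (h : IsJoinOfPos l s) (h' : IsJoinOfPos l' s') :
    ∃ w, IsJoinOfPos (l.bind (fun a => l'.map (fun b => and a b))) w ∧
      FEq (and s s') w := by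
  induction h with
  | single a =>
    obtain ⟨w, hw, hf⟩ := and_join h'
    exact ⟨w, by simpa using hw, hf⟩
  | @or l1 l2 s1 s2 h1 h2 ih1 ih2 =>
    obtain ⟨w1, hw1, hf1⟩ := ih1
    obtain ⟨w2, hw2, hf2⟩ := ih2
    refine ⟨or w1 w2, by rw [Multiset.add_bind]; exact hw1.or hw2, ?_⟩
    refine (feq_and_comm _ _).trans' ((Step.bt14 s' s1 s2).feq.trans' ?_)
    exact ((feq_and_comm s' s1).trans' hf1).orCongr ((feq_and_comm s' s2).trans' hf2)

end BT

open BT in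
/-- if `s` is an iterated join of `t 0, …, t (m-1)` and `s'` is
an iterated join of `u 0, …, u (n-1)`, then `(s ∧ s')` is f-equivalent to any
iterated join of the `m·n` terms `(t i ∧ u j)`. -/
theorem join_and_join_feq_join_of_ands (m n : ℕ)
    (t : Fin m → BT) (u : Fin n → BT) (s s' v : BT)
    (hs : IsJoinOf (Multiset.map t Finset.univ.val) s)
    (hs' : IsJoinOf (Multiset.map u Finset.univ.val) s')
    (hv : IsJoinOf
      (Multiset.map (fun p : Fin m × Fin n => BT.and (t p.1) (u p.2))
        Finset.univ.val) v) :
    FEq (BT.and s s') v := by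
  have hprod : (Multiset.map (fun p : Fin m × Fin n => BT.and (t p.1) (u p.2))
        Finset.univ.val)
      = (Multiset.map t Finset.univ.val).bind
          (fun a => (Multiset.map u Finset.univ.val).map (fun b => BT.and a b)) := by
    rw [← Finset.univ_product_univ, Finset.product_val]
    simp only [SProd.sprod, Multiset.product, Multiset.map_bind, Multiset.bind_map,
      Multiset.map_map, Function.comp]
  rcases hs with ⟨hl, rfl⟩ | hs
  · -- m = 0
    have hm0 : m = 0 := by simpa using congrArg Multiset.card hl
    have : (Multiset.map (fun p : Fin m × Fin n => BT.and (t p.1) (u p.2))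
        Finset.univ.val) = 0 := by
      subst hm0; simp
    rcases hv with ⟨_, rfl⟩ | hv
    · exact (Step.bt1 s').feq
    · exact absurd this hv.ne_zero
  rcases hs' with ⟨hl', rfl⟩ | hs'
  · -- n = 0
    have hn0 : n = 0 := by simpa using congrArg Multiset.card hl'
    have : (Multiset.map (fun p : Fin m × Fin n => BT.and (t p.1) (u p.2))
        Finset.univ.val) = 0 := by
      subst hn0; simp
    rcases hv with ⟨_, rfl⟩ | hv
    · exact (feq_and_comm s BT.zero).trans' (Step.bt1 s).feq
    · exact absurd this hv.ne_zero
  obtain ⟨w, hw, hfw⟩ := join_and_join hs hs'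
  rw [← hprod] at hw
  rcases hv with ⟨hl0, rfl⟩ | hv
  · exact absurd hl0 hw.ne_zero
  · exact hfw.trans' (IsJoinOfPos.feq _ hw hv)
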